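/- Let k ≥ 1 and j ≥ 1 be integers. Then for every t > 0, the (j−1)-st derivative of f_k at t satisfies f_k^{(j−1)}(t) = (t^{k−j} e^{−t²/2} / (Γ(k/2) 2^{(k−2)/2})) · Σ_{l=0}^{⌊(j−1)/2⌋} Σ_{m=0}^{j−1−2l} 𝟙{k ≥ j−m−2l} · binom(k−1, j−1−m−2l) · ((−1)^{m+l} (j−1)! / (m! l! 2^l)) · t^{2m+2l}. -/

import Mathlib

open Real

/-- The density of the square root of a `χ²_m` random variable:
`f_m(t) = t^{m−1} e^{−t²/2} / (Γ(m/2) 2^{(m−2)/2})`. -/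
noncomputable def chiDens (m : ℕ) (t : ℝ) : ℝ :=
  t ^ (m - 1) * Real.exp (-t ^ 2 / 2) /
    (Real.Gamma ((m : ℝ) / 2) * (2 : ℝ) ^ (((m : ℝ) - 2) / 2))

open Finset

noncomputable def B (c n s l : ℕ) : ℝ :=
  if l + s ≤ n then
    (c.choose (n - s - l) : ℝ) * (Nat.factorial n : ℝ) /
      ((Nat.factorial (s - l) : ℝ) * (Nat.factorial l : ℝ) * 2 ^ l)
  else 0
noncomputable def A (c n s : ℕ) : ℝ := ∑ l ∈ range (s + 1), B c n s l
lemma choose_cast_rel (c r : ℕ) :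
    ((c : ℝ) - r) * (c.choose r : ℝ) = ((r : ℝ) + 1) * (c.choose (r + 1) : ℝ) := by
  rcases lt_or_ge r c with h | h
  · have h0 := Nat.choose_succ_right_eq c r
    have h1 : ((c.choose (r+1) * (r+1) : ℕ) : ℝ) = ((c.choose r * (c - r) : ℕ) : ℝ) := by
      rw [h0]
    push_cast [Nat.cast_sub h.le] at h1
    linarith
  · rcases eq_or_lt_of_le h with rfl | h'
    · simp [Nat.choose_succ_self]
    · simp [Nat.choose_eq_zero_of_lt h', Nat.choose_eq_zero_of_lt (Nat.lt_succ_of_lt h')]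

lemma choose_div_rel (c r : ℕ) :
    (c.choose (r + 1) : ℝ) = ((c : ℝ) - r) * (c.choose r : ℝ) / ((r : ℝ) + 1) := by
  rw [eq_div_iff (by positivity), mul_comm, ← choose_cast_rel]

lemma recA0 (c n : ℕ) : A c (n + 1) 0 = ((c : ℝ) - n) * A c n 0 := by
  rw [A, A, Finset.sum_range_one, Finset.sum_range_one, B, B]
  simp only [Nat.zero_le, Nat.sub_zero, Nat.factorial_zero, if_true, Nat.le_add_right,
    Nat.zero_add]
  rw [Nat.factorial_succ]
  have h := choose_cast_rel c n
  push_cast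
  linear_combination (-(n.factorial : ℝ)) * h

lemma recA (c n s : ℕ) :
    A c (n + 1) (s + 1) =
      ((c : ℝ) - n + 2 * ((s : ℝ) + 1)) * A c n (s + 1) + A c n s := by
  set T : ℕ → ℝ := fun l =>
    if 1 ≤ l ∧ l ≤ s + 1 ∧ l + (s + 1) ≤ n + 1 then
      (c.choose (n - s - l) : ℝ) * (Nat.factorial n : ℝ) /
        ((Nat.factorial (s + 1 - l) : ℝ) * (Nat.factorial (l - 1) : ℝ) * 2 ^ (l - 1))
    else 0 with hT
  have htel : ∑ l ∈ range (s + 2), (T l - T (l + 1)) = 0 := by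
    rw [Finset.sum_range_sub']
    have h1 : T 0 = 0 := by rw [hT]; simp
    have h2 : T (s + 2) = 0 := by rw [hT]; exact if_neg (by omega)
    rw [h1, h2, sub_zero]
  have hAs : ∑ l ∈ range (s + 2), (if l ≤ s then B c n s l else 0) = A c n s := by
    rw [Finset.sum_range_succ, if_neg (by omega), add_zero, A]
    exact Finset.sum_congr rfl fun l hl =>
      if_pos (Nat.lt_succ_iff.mp (mem_range.mp hl))
  have key : ∀ l ∈ range (s + 2),
      B c (n + 1) (s + 1) l =
        ((c : ℝ) - n + 2 * ((s : ℝ) + 1)) * B c n (s + 1) l +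
          (if l ≤ s then B c n s l else 0) + (T l - T (l + 1)) := by
    intro l hl
    have hls : l ≤ s + 1 := Nat.lt_succ_iff.mp (mem_range.mp hl)
    rcases le_or_gt (l + (s + 1)) n with h2 | h2
    · -- main case: l + (s+1) ≤ n
      obtain ⟨r, rfl⟩ : ∃ r, n = l + (s + 1) + r := ⟨n - (l + (s + 1)), by omega⟩
      rcases le_or_gt l s with hls' | hls'
      · rcases Nat.eq_zero_or_pos l with rfl | hl1
        · -- l = 0, l ≤ s
          rw [hT]; simp only
          rw [if_pos hls', B, B, B]
          simp only [Nat.zero_add]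
          rw [if_pos (show s+1 ≤ s+1 + r + 1 by omega),
            if_pos (show s+1 ≤ s+1 + r by omega),
            if_pos (show s ≤ s+1 + r by omega),
            if_neg (show ¬((1:ℕ) ≤ 0 ∧ 0 ≤ s+1 ∧ s+1 ≤ s+1 + r + 1) by omega),
            if_pos (show (1:ℕ) ≤ 1 ∧ 1 ≤ s+1 ∧ 1 + (s+1) ≤ s+1 + r + 1 by omega)]
          have e0 : s + 1 - 0 = s + 1 := by omega
          have e1 : s + 1 + r + 1 - (s + 1) - 0 = r + 1 := by omega
          have e2 : s + 1 + r - (s + 1) - 0 = r := by omega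
          have e3 : s + 1 + r - s - 0 = r + 1 := by omega
          have e4 : s + 1 + r - s - 1 = r := by omega
          have e5 : s + 1 - 1 = s := by omega
          have e6 : (1:ℕ) - 1 = 0 := by omega
          have e7 : s - 0 = s := by omega
          rw [e0, e1, e2, e3, e4, e5, e6, e7,
            Nat.factorial_succ (s + 1 + r), Nat.factorial_succ s, choose_div_rel c r]
          simp only [Nat.factorial_zero, pow_zero]
          push_cast
          field_simp
          ring
        · -- 1 ≤ l ≤ s
          obtain ⟨b, rfl⟩ : ∃ b, l = b + 1 := ⟨l - 1, by omega⟩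
          obtain ⟨a, rfl⟩ : ∃ a, s = b + 1 + a := ⟨s - (b + 1), by omega⟩
          rw [hT]; simp only
          rw [if_pos hls', B, B, B,
            if_pos (show b+1 + (b+1+a+1) ≤ b+1 + (b+1+a+1) + r + 1 by omega),
            if_pos (show b+1 + (b+1+a+1) ≤ b+1 + (b+1+a+1) + r by omega),
            if_pos (show b+1 + (b+1+a) ≤ b+1 + (b+1+a+1) + r by omega),
            if_pos (show 1 ≤ b+1 ∧ b+1 ≤ b+1+a+1 ∧ b+1 + (b+1+a+1) ≤ b+1 + (b+1+a+1) + r + 1 by omega),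
            if_pos (show 1 ≤ b+1+1 ∧ b+1+1 ≤ b+1+a+1 ∧ b+1+1 + (b+1+a+1) ≤ b+1 + (b+1+a+1) + r + 1 by omega)]
          have e1 : b+1 + (b+1+a+1) + r + 1 - (b+1+a+1) - (b+1) = r + 1 := by omega
          have e2 : b+1 + (b+1+a+1) + r - (b+1+a+1) - (b+1) = r := by omega
          have e3 : b+1 + (b+1+a+1) + r - (b+1+a) - (b+1) = r + 1 := by omega
          have e4 : b+1 + (b+1+a+1) + r - (b+1+a) - (b+1+1) = r := by omega
          have e5 : b+1+a+1 - (b+1+1) = a := by omega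
          have e6 : b+1+1 - 1 = b + 1 := by omega
          have e7 : b+1+a - (b+1) = a := by omega
          have e8 : b+1+a+1 - (b+1) = a + 1 := by omega
          have e9 : b+1 - 1 = b := by omega
          have e10 : b+1 + (b+1+a+1) + r + 1 = (b+1 + (b+1+a+1) + r) + 1 := by omega
          rw [e1, e2, e3, e4, e5, e6, e7, e8, e9, e10,
            Nat.factorial_succ (b+1 + (b+1+a+1) + r), Nat.factorial_succ a,
            Nat.factorial_succ b, pow_succ, choose_div_rel c r]
          push_cast
          field_simp
          ring
      · -- l = s + 1
        have hleq : l = s + 1 := by omega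
        subst hleq
        rw [hT]; simp only
        rw [if_neg (show ¬(s+1 ≤ s) by omega), B, B,
          if_pos (show s+1 + (s+1) ≤ s+1 + (s+1) + r + 1 by omega),
          if_pos (show s+1 + (s+1) ≤ s+1 + (s+1) + r by omega),
          if_pos (show 1 ≤ s+1 ∧ s+1 ≤ s+1 ∧ s+1 + (s+1) ≤ s+1 + (s+1) + r + 1 by omega),
          if_neg (show ¬(1 ≤ s+1+1 ∧ s+1+1 ≤ s+1 ∧ s+1+1 + (s+1) ≤ s+1 + (s+1) + r + 1) by omega)]
        have e1 : s+1 + (s+1) + r + 1 - (s+1) - (s+1) = r + 1 := by omega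
        have e2 : s+1 + (s+1) + r - (s+1) - (s+1) = r := by omega
        have e3 : s+1 + (s+1) + r - s - (s+1) = r + 1 := by omega
        have e5 : s+1 - (s+1) = 0 := by omega
        have e6 : s+1 - 1 = s := by omega
        have e10 : s+1 + (s+1) + r + 1 = (s+1 + (s+1) + r) + 1 := by omega
        rw [e1, e2, e3, e5, e6, e10,
          Nat.factorial_succ (s+1 + (s+1) + r), Nat.factorial_succ s, pow_succ,
          choose_div_rel c r]
        simp only [Nat.factorial_zero]
        push_cast
        field_simp
        ring
    · rcases le_or_gt (l + (s + 1)) (n + 1) with h1 | h1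
      · -- boundary: n = l + s
        have hn : n = l + s := by omega
        subst hn
        rcases le_or_gt l s with hls' | hls'
        · rcases Nat.eq_zero_or_pos l with rfl | hl1
          · -- l = 0, n = s
            rw [hT]; simp only
            rw [if_pos hls', B, B, B]
            simp only [Nat.zero_add]
            rw [if_pos (show s+1 ≤ s + 1 by omega),
              if_neg (show ¬(s+1 ≤ s) by omega),
              if_pos (show s ≤ s by omega),
              if_neg (show ¬((1:ℕ) ≤ 0 ∧ 0 ≤ s+1 ∧ s+1 ≤ s + 1) by omega),
              if_neg (show ¬((1:ℕ) ≤ 1 ∧ 1 ≤ s+1 ∧ 1 + (s+1) ≤ s + 1) by omega)]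
            have e0 : s + 1 - 0 = s + 1 := by omega
            have e1 : s + 1 - (s+1) - 0 = 0 := by omega
            have e3 : s - s - 0 = 0 := by omega
            have e7 : s - 0 = s := by omega
            rw [e0, e1, e3, e7, Nat.factorial_succ s]
            simp only [Nat.choose_zero_right, Nat.factorial_zero, pow_zero]
            push_cast
            field_simp
            ring
          · -- 1 ≤ l ≤ s, n = l + s
            obtain ⟨b, rfl⟩ : ∃ b, l = b + 1 := ⟨l - 1, by omega⟩
            obtain ⟨a, rfl⟩ : ∃ a, s = b + 1 + a := ⟨s - (b + 1), by omega⟩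
            rw [hT]; simp only
            rw [if_pos hls', B, B, B,
              if_pos (show b+1 + (b+1+a+1) ≤ b+1 + (b+1+a) + 1 by omega),
              if_neg (show ¬(b+1 + (b+1+a+1) ≤ b+1 + (b+1+a)) by omega),
              if_pos (show b+1 + (b+1+a) ≤ b+1 + (b+1+a) by omega),
              if_pos (show 1 ≤ b+1 ∧ b+1 ≤ b+1+a+1 ∧ b+1 + (b+1+a+1) ≤ b+1 + (b+1+a) + 1 by omega),
              if_neg (show ¬(1 ≤ b+1+1 ∧ b+1+1 ≤ b+1+a+1 ∧ b+1+1 + (b+1+a+1) ≤ b+1 + (b+1+a) + 1) by omega)]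
            have e1 : b+1 + (b+1+a) + 1 - (b+1+a+1) - (b+1) = 0 := by omega
            have e3 : b+1 + (b+1+a) - (b+1+a) - (b+1) = 0 := by omega
            have e7 : b+1+a - (b+1) = a := by omega
            have e8 : b+1+a+1 - (b+1) = a + 1 := by omega
            have e9 : b+1 - 1 = b := by omega
            have e10 : b+1 + (b+1+a) + 1 = (b+1 + (b+1+a)) + 1 := by omega
            rw [e1, e3, e7, e8, e9, e10, Nat.factorial_succ (b+1 + (b+1+a)),
              Nat.factorial_succ a, Nat.factorial_succ b, pow_succ]
            simp only [Nat.choose_zero_right]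
            push_cast
            field_simp
            ring
        · -- l = s+1, n = l + s
          have hleq : l = s + 1 := by omega
          subst hleq
          rw [hT]; simp only
          rw [if_neg (show ¬(s+1 ≤ s) by omega), B, B,
            if_pos (show s+1 + (s+1) ≤ s+1 + s + 1 by omega),
            if_neg (show ¬(s+1 + (s+1) ≤ s+1 + s) by omega),
            if_pos (show 1 ≤ s+1 ∧ s+1 ≤ s+1 ∧ s+1 + (s+1) ≤ s+1 + s + 1 by omega),
            if_neg (show ¬(1 ≤ s+1+1 ∧ s+1+1 ≤ s+1 ∧ s+1+1 + (s+1) ≤ s+1 + s + 1) by omega)]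
          have e1 : s+1 + s + 1 - (s+1) - (s+1) = 0 := by omega
          have e3 : s+1 + s - s - (s+1) = 0 := by omega
          have e5 : s+1 - (s+1) = 0 := by omega
          have e6 : s+1 - 1 = s := by omega
          have e10 : s+1 + s + 1 = (s+1 + s) + 1 := by omega
          rw [e1, e3, e5, e6, e10, Nat.factorial_succ (s+1 + s), Nat.factorial_succ s, pow_succ]
          simp only [Nat.choose_zero_right, Nat.factorial_zero]
          push_cast
          field_simp
          ring
      · -- everything zero
        rw [hT]; simp only
        have hz : (if l ≤ s then B c n s l else 0) = 0 := by
          rcases le_or_gt l s with h | h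
          · rw [if_pos h, B, if_neg (by omega)]
          · rw [if_neg (by omega)]
        rw [hz, B, B, if_neg (show ¬(l + (s+1) ≤ n + 1) by omega),
          if_neg (show ¬(l + (s+1) ≤ n) by omega),
          if_neg (show ¬(1 ≤ l ∧ l ≤ s+1 ∧ l + (s+1) ≤ n + 1) by omega),
          if_neg (show ¬(1 ≤ l+1 ∧ l+1 ≤ s+1 ∧ l+1 + (s+1) ≤ n + 1) by omega)]
        ring
  calc A c (n + 1) (s + 1) = ∑ l ∈ range (s + 2), B c (n + 1) (s + 1) l := rfl
    _ = ∑ l ∈ range (s + 2), (((c : ℝ) - n + 2 * ((s : ℝ) + 1)) * B c n (s + 1) l +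
          (if l ≤ s then B c n s l else 0) + (T l - T (l + 1))) := Finset.sum_congr rfl key
    _ = ((c : ℝ) - n + 2 * ((s : ℝ) + 1)) * A c n (s + 1) + A c n s := by
        rw [Finset.sum_add_distrib, Finset.sum_add_distrib, htel, add_zero, hAs,
          ← Finset.mul_sum]
        rfl

lemma A_eq_zero {c n s : ℕ} (h : n < s) : A c n s = 0 :=
  Finset.sum_eq_zero fun l _ => if_neg (by omega)


lemma main_formula (k : ℕ) (hk : 1 ≤ k) (n : ℕ) :
    ∀ t : ℝ, 0 < t → iteratedDeriv n (chiDens k) t =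
      t ^ ((k : ℤ) - 1 - n) * Real.exp (-t ^ 2 / 2) /
        (Real.Gamma ((k : ℝ) / 2) * (2 : ℝ) ^ (((k : ℝ) - 2) / 2)) *
      ∑ s ∈ range (n + 1), (-1 : ℝ) ^ s * A (k - 1) n s * t ^ (2 * s) := by
  induction n with
  | zero =>
    intro t ht
    rw [iteratedDeriv_zero]
    have h1 : A (k - 1) 0 0 = 1 := by
      rw [A, Finset.sum_range_one, B, if_pos (Nat.le_refl 0)]
      simp
    simp only [Nat.cast_zero, sub_zero, zero_add, Nat.zero_add, Finset.sum_range_one,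
      pow_zero, mul_one, h1, Nat.mul_zero]
    rw [chiDens]
    have h2 : t ^ (k - 1) = t ^ ((k : ℤ) - 1) := by
      rw [show (k : ℤ) - 1 = ((k - 1 : ℕ) : ℤ) by omega, zpow_natCast]
    rw [h2]
  | succ n ih =>
    intro t ht
    have hne : t ≠ 0 := ne_of_gt ht
    set K := Real.Gamma ((k : ℝ) / 2) * (2 : ℝ) ^ (((k : ℝ) - 2) / 2) with hK
    set c := k - 1 with hc
    set F : ℝ → ℝ := fun x => x ^ ((k : ℤ) - 1 - n) * Real.exp (-x ^ 2 / 2) / K *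
        ∑ s ∈ range (n + 1), (-1 : ℝ) ^ s * A c n s * x ^ (2 * s) with hF
    have hev : iteratedDeriv n (chiDens k) =ᶠ[nhds t] F := by
      filter_upwards [isOpen_Ioi.mem_nhds ht] with x hx
      exact ih x hx
    rw [iteratedDeriv_succ, hev.deriv_eq]
    have h1 : HasDerivAt (fun x : ℝ => x ^ ((k : ℤ) - 1 - n))
        ((((k : ℤ) - 1 - n : ℤ) : ℝ) * t ^ ((k : ℤ) - 1 - n - 1)) t :=
      hasDerivAt_zpow _ _ (Or.inl hne)
    have h2 : HasDerivAt (fun x : ℝ => Real.exp (-x ^ 2 / 2))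
        (Real.exp (-t ^ 2 / 2) * (-t)) t := by
      have hinner : HasDerivAt (fun x : ℝ => -x ^ 2 / 2) (-t) t := by
        have h := ((hasDerivAt_pow 2 t).neg).div_const 2
        refine h.congr_deriv ?_
        push_cast
        ring
      simpa using hinner.exp
    have h3 : HasDerivAt (fun x : ℝ => ∑ s ∈ range (n + 1), (-1 : ℝ) ^ s * A c n s * x ^ (2 * s))
        (∑ s ∈ range (n + 1), (-1 : ℝ) ^ s * A c n s * ((2 * s : ℕ) * t ^ (2 * s - 1))) t := by
      apply HasDerivAt.fun_sum
      intro s _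
      exact (hasDerivAt_pow (2 * s) t).const_mul _
    have hD : HasDerivAt F
        (((((k : ℤ) - 1 - n : ℤ) : ℝ) * t ^ ((k : ℤ) - 1 - n - 1) * Real.exp (-t ^ 2 / 2) +
            t ^ ((k : ℤ) - 1 - n) * (Real.exp (-t ^ 2 / 2) * (-t))) / K *
            (∑ s ∈ range (n + 1), (-1 : ℝ) ^ s * A c n s * t ^ (2 * s)) +
          t ^ ((k : ℤ) - 1 - n) * Real.exp (-t ^ 2 / 2) / K *
            (∑ s ∈ range (n + 1), (-1 : ℝ) ^ s * A c n s * ((2 * s : ℕ) * t ^ (2 * s - 1)))) t :=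
      ((h1.mul h2).div_const K).mul h3
    rw [hD.deriv]
    have hSder : t * (∑ s ∈ range (n + 1), (-1 : ℝ) ^ s * A c n s * ((2 * s : ℕ) * t ^ (2 * s - 1)))
        = ∑ s ∈ range (n + 1), (-1 : ℝ) ^ s * (2 * (s : ℝ) * A c n s) * t ^ (2 * s) := by
      rw [Finset.mul_sum]
      refine Finset.sum_congr rfl fun s _ => ?_
      rcases Nat.eq_zero_or_pos s with rfl | hs
      · simp
      · have ht2 : t * t ^ (2 * s - 1) = t ^ (2 * s) := by
          conv_rhs => rw [show 2 * s = (2 * s - 1) + 1 by omega]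
          rw [pow_succ]
          ring
        push_cast
        calc t * ((-1 : ℝ) ^ s * A c n s * (2 * (s : ℝ) * t ^ (2 * s - 1)))
            = (-1 : ℝ) ^ s * A c n s * (2 * (s : ℝ)) * (t * t ^ (2 * s - 1)) := by ring
          _ = (-1 : ℝ) ^ s * (2 * (s : ℝ) * A c n s) * t ^ (2 * s) := by rw [ht2]; ring
    have hPre : ∑ s ∈ range (n + 1 + 1), (-1 : ℝ) ^ s *
          (if s = 0 then (0 : ℝ) else A c n (s - 1)) * t ^ (2 * s)
        = -(t ^ 2 * ∑ s ∈ range (n + 1), (-1 : ℝ) ^ s * A c n s * t ^ (2 * s)) := by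
      rw [Finset.sum_range_succ' (fun s => (-1 : ℝ) ^ s *
          (if s = 0 then (0 : ℝ) else A c n (s - 1)) * t ^ (2 * s)) (n + 1)]
      have h0 : (-1 : ℝ) ^ (0 : ℕ) * (if (0 : ℕ) = 0 then (0 : ℝ) else A c n (0 - 1)) *
          t ^ (2 * 0) = 0 := by simp
      rw [h0, add_zero, Finset.mul_sum, ← Finset.sum_neg_distrib]
      refine Finset.sum_congr rfl fun i _ => ?_
      simp only [if_neg (Nat.succ_ne_zero i), Nat.add_sub_cancel]
      rw [pow_succ, show 2 * (i + 1) = 2 * i + 2 by ring, pow_add]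
      ring
    have hrec : ∀ s ∈ range (n + 1 + 1), (-1 : ℝ) ^ s * A c (n + 1) s * t ^ (2 * s)
        = (-1 : ℝ) ^ s * (((c : ℝ) - n + 2 * s) * A c n s) * t ^ (2 * s) +
          (-1 : ℝ) ^ s * (if s = 0 then (0 : ℝ) else A c n (s - 1)) * t ^ (2 * s) := by
      intro s _
      rcases s with _ | i
      · rw [recA0]
        norm_num
      · rw [recA c n i]
        simp only [if_neg (Nat.succ_ne_zero i), Nat.add_sub_cancel]
        push_cast
        ring
    have hA1 : A c n (n + 1) = 0 := A_eq_zero (by omega)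
    have hkey : ∑ s ∈ range (n + 1 + 1), (-1 : ℝ) ^ s * A c (n + 1) s * t ^ (2 * s)
        = ((c : ℝ) - n) * (∑ s ∈ range (n + 1), (-1 : ℝ) ^ s * A c n s * t ^ (2 * s)) +
          t * (∑ s ∈ range (n + 1), (-1 : ℝ) ^ s * A c n s * ((2 * s : ℕ) * t ^ (2 * s - 1))) -
          t ^ 2 * (∑ s ∈ range (n + 1), (-1 : ℝ) ^ s * A c n s * t ^ (2 * s)) := by
      rw [Finset.sum_congr rfl hrec, Finset.sum_add_distrib, hPre, hSder]
      have hfirst : ∑ s ∈ range (n + 1 + 1), (-1 : ℝ) ^ s * (((c : ℝ) - n + 2 * s) * A c n s) * t ^ (2 * s)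
          = ∑ s ∈ range (n + 1), (-1 : ℝ) ^ s * (((c : ℝ) - n + 2 * s) * A c n s) * t ^ (2 * s) := by
        rw [Finset.sum_range_succ, hA1]
        push_cast
        ring
      rw [hfirst]
      have hsplit : ∑ s ∈ range (n + 1), (-1 : ℝ) ^ s * (((c : ℝ) - n + 2 * s) * A c n s) * t ^ (2 * s)
          = ((c : ℝ) - n) * (∑ s ∈ range (n + 1), (-1 : ℝ) ^ s * A c n s * t ^ (2 * s)) +
            ∑ s ∈ range (n + 1), (-1 : ℝ) ^ s * (2 * (s : ℝ) * A c n s) * t ^ (2 * s) := by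
        rw [Finset.mul_sum, ← Finset.sum_add_distrib]
        refine Finset.sum_congr rfl fun s _ => ?_
        ring
      rw [hsplit]
      ring
    have hexp : (k : ℤ) - 1 - ((n + 1 : ℕ) : ℤ) = (k : ℤ) - 1 - n - 1 := by push_cast; ring
    have hcast : ((((k : ℤ) - 1 - n) : ℤ) : ℝ) = (c : ℝ) - n := by
      rw [hc]
      push_cast [Nat.cast_sub hk]
      ring
    have hz : t ^ ((k : ℤ) - 1 - n) = t ^ ((k : ℤ) - 1 - n - 1) * t := by
      rw [← zpow_add_one₀ hne]
      congr 1
      ring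
    rw [hexp, hkey, hz, hcast]
    ring

lemma sum_conv (k n : ℕ) (hk : 1 ≤ k) (t : ℝ) :
    (∑ l ∈ range (n / 2 + 1), ∑ m ∈ range (n + 1 - 2 * l),
      (if n + 1 - m - 2 * l ≤ k then (1 : ℝ) else 0) *
        (Nat.choose (k - 1) (n - m - 2 * l) : ℝ) *
        ((-1 : ℝ) ^ (m + l) * (Nat.factorial n : ℝ) /
          ((Nat.factorial m : ℝ) * (Nat.factorial l : ℝ) * 2 ^ l)) *
        t ^ (2 * m + 2 * l))
    = ∑ s ∈ range (n + 1), (-1 : ℝ) ^ s * A (k - 1) n s * t ^ (2 * s) := by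
  set g : ℕ → ℕ → ℝ := fun l m =>
    (Nat.choose (k - 1) (n - m - 2 * l) : ℝ) *
      ((-1 : ℝ) ^ (m + l) * (Nat.factorial n : ℝ) /
        ((Nat.factorial m : ℝ) * (Nat.factorial l : ℝ) * 2 ^ l)) *
      t ^ (2 * m + 2 * l) with hg
  have step1 : (∑ l ∈ range (n / 2 + 1), ∑ m ∈ range (n + 1 - 2 * l),
      (if n + 1 - m - 2 * l ≤ k then (1 : ℝ) else 0) *
        (Nat.choose (k - 1) (n - m - 2 * l) : ℝ) *
        ((-1 : ℝ) ^ (m + l) * (Nat.factorial n : ℝ) /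
          ((Nat.factorial m : ℝ) * (Nat.factorial l : ℝ) * 2 ^ l)) *
        t ^ (2 * m + 2 * l))
      = ∑ l ∈ range (n / 2 + 1), ∑ m ∈ range (n + 1 - 2 * l), g l m := by
    refine Finset.sum_congr rfl fun l hl => Finset.sum_congr rfl fun m hm => ?_
    have hm' : m + 2 * l ≤ n := by
      have := mem_range.mp hm
      omega
    rcases le_or_gt (n + 1 - m - 2 * l) k with h | h
    · rw [if_pos h]
      simp only [hg]
      ring
    · rw [if_neg (by omega)]
      have hz : Nat.choose (k - 1) (n - m - 2 * l) = 0 :=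
        Nat.choose_eq_zero_of_lt (by omega)
      simp [hg, hz]
  have step2 : ∑ s ∈ range (n + 1), (-1 : ℝ) ^ s * A (k - 1) n s * t ^ (2 * s)
      = ∑ s ∈ range (n + 1), ∑ l ∈ range (s + 1),
          (if l ≤ s ∧ l + s ≤ n then g l (s - l) else 0) := by
    refine Finset.sum_congr rfl fun s hs => ?_
    rw [A, Finset.mul_sum, Finset.sum_mul]
    refine Finset.sum_congr rfl fun l hl => ?_
    have hls : l ≤ s := Nat.lt_succ_iff.mp (mem_range.mp hl)
    rcases le_or_gt (l + s) n with h | h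
    · rw [B, if_pos h, if_pos ⟨hls, h⟩]
      simp only [hg]
      have e1 : n - (s - l) - 2 * l = n - s - l := by omega
      have e2 : (s - l) + l = s := by omega
      have e3 : 2 * (s - l) + 2 * l = 2 * s := by omega
      rw [e1, e2, e3]
      ring
    · rw [B, if_neg (by omega), if_neg (by omega)]
      ring
  rw [step1, step2]
  -- convert both to filtered product sums
  have hL : ∑ l ∈ range (n / 2 + 1), ∑ m ∈ range (n + 1 - 2 * l), g l m
      = ∑ p ∈ (range (n + 1) ×ˢ range (n + 1)).filter (fun p => 2 * p.1 + p.2 ≤ n),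
          g p.1 p.2 := by
    rw [Finset.sum_filter, Finset.sum_product]
    have houter : ∀ l ∈ range (n / 2 + 1),
        ∑ m ∈ range (n + 1 - 2 * l), g l m
          = ∑ m ∈ range (n + 1), (if 2 * l + m ≤ n then g l m else 0) := by
      intro l hl
      have h1 : ∑ m ∈ range (n + 1 - 2 * l), g l m
          = ∑ m ∈ range (n + 1 - 2 * l), (if 2 * l + m ≤ n then g l m else 0) := by
        refine Finset.sum_congr rfl fun m hm => ?_
        rw [if_pos (by have := mem_range.mp hm; omega)]
      rw [h1]
      refine Finset.sum_subset (by intro m hm; simp at hm ⊢; omega) ?_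
      intro m hm hm'
      rw [if_neg (by simp at hm hm'; omega)]
    rw [Finset.sum_congr rfl houter]
    refine Finset.sum_subset (by intro l hl; simp at hl ⊢; omega) ?_
    intro l hl hl'
    refine Finset.sum_eq_zero fun m hm => ?_
    rw [if_neg (by simp at hl hl'; omega)]
  have hR : ∑ s ∈ range (n + 1), ∑ l ∈ range (s + 1),
        (if l ≤ s ∧ l + s ≤ n then g l (s - l) else 0)
      = ∑ p ∈ (range (n + 1) ×ˢ range (n + 1)).filter (fun p => p.2 ≤ p.1 ∧ p.2 + p.1 ≤ n),
          g p.2 (p.1 - p.2) := by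
    rw [Finset.sum_filter, Finset.sum_product]
    refine Finset.sum_congr rfl fun s hs => ?_
    refine Finset.sum_subset (by intro l hl; simp at hs hl ⊢; omega) ?_
    intro l hl hl'
    rw [if_neg (by simp at hl hl'; omega)]
  rw [hL, hR]
  refine Finset.sum_nbij' (fun p => (p.2 + p.1, p.1)) (fun q => (q.2, q.1 - q.2)) ?_ ?_ ?_ ?_ ?_
  · intro p hp
    simp only [Finset.mem_filter, Finset.mem_product, Finset.mem_range] at hp ⊢
    omega
  · intro q hq
    simp only [Finset.mem_filter, Finset.mem_product, Finset.mem_range] at hq ⊢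
    omega
  · intro p hp
    simp only [Finset.mem_filter, Finset.mem_product, Finset.mem_range] at hp
    ext <;> simp <;> omega
  · intro q hq
    simp only [Finset.mem_filter, Finset.mem_product, Finset.mem_range] at hq
    ext <;> simp <;> omega
  · intro p hp
    simp only [Finset.mem_filter, Finset.mem_product, Finset.mem_range] at hp
    have e : p.2 + p.1 - p.1 = p.2 := by omega
    simp only [e]

theorem stmt8 (k j : ℕ) (hk : 1 ≤ k) (hj : 1 ≤ j) (t : ℝ) (ht : 0 < t) :
    iteratedDeriv (j - 1) (chiDens k) t =
      t ^ ((k : ℤ) - j) * Real.exp (-t ^ 2 / 2) /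
          (Real.Gamma ((k : ℝ) / 2) * (2 : ℝ) ^ (((k : ℝ) - 2) / 2)) *
        ∑ l ∈ Finset.range ((j - 1) / 2 + 1), ∑ m ∈ Finset.range (j - 2 * l),
          (if j - m - 2 * l ≤ k then (1 : ℝ) else 0) *
            (Nat.choose (k - 1) (j - 1 - m - 2 * l) : ℝ) *
            ((-1 : ℝ) ^ (m + l) * (Nat.factorial (j - 1) : ℝ) /
              ((Nat.factorial m : ℝ) * (Nat.factorial l : ℝ) * 2 ^ l)) *
            t ^ (2 * m + 2 * l) := by
  obtain ⟨n, rfl⟩ : ∃ n, j = n + 1 := ⟨j - 1, by omega⟩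
  simp only [Nat.add_sub_cancel]
  rw [main_formula k hk n t ht]
  have hexp : (k : ℤ) - ((n + 1 : ℕ) : ℤ) = (k : ℤ) - 1 - (n : ℕ) := by push_cast; ring
  rw [hexp, sum_conv k n hk t]
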